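/- Let T > 0 be a real number, let d, τ, N ≥ 1 be integers, let a : ℝ → ℂ be continuous with a(t) = 0 for all t ∉ [0, (N+1)T], and let ζ : ℝ → ℂ be continuous. Define b : ℝ → ℂ by b(t) = ∑_{k=0}^∞ C(k+d−1, d−1) · a(t + kτT) for t ∈ [0, (N+1)T] (a finite sum, since a has compact support) and b(t) = 0 for t ∉ [0, (N+1)T], and define v : [−dτT, 0) → ℂ by v(t) = ∑_{l=⌈−t/(τT)⌉}^{d} (−1)^l · C(d,l) · b(t + lτT). Then ∫_0^{(N+1)T} a(t) ζ(t) dt = ∫_0^{(N+1)T} b(t) · ( ∑_{l=0}^{d} (−1)^l C(d,l) ζ(t − lτT) ) dt − ∫_{−dτT}^{0} v(t) ζ(t) dt. -/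

import Mathlib

open MeasureTheory Finset fwdDiff

noncomputable def auxF (a : ℝ → ℂ) (s : ℝ) (e : ℕ) : ℝ → ℂ :=
  fun u => ∑' k : ℕ, (((k + e).choose e : ℕ) : ℂ) * a (u + (k : ℝ) * s)

lemma aux_summable {a : ℝ → ℂ} {s Mr : ℝ} (hs : 0 < s)
    (ha : ∀ t, Mr < t → a t = 0) (c : ℕ → ℂ) (u : ℝ) :
    Summable (fun k : ℕ => c k * a (u + (k : ℝ) * s)) := by
  apply summable_of_ne_finset_zero (s := Finset.range (⌈(Mr - u) / s⌉.toNat + 1))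
  intro k hk
  have hk' : (⌈(Mr - u) / s⌉.toNat + 1 : ℕ) ≤ k := le_of_not_gt fun h => hk (mem_range.mpr h)
  have h1 : (Mr - u) / s < (k : ℝ) := by
    have h2 : ((Mr - u) / s : ℝ) ≤ (⌈(Mr - u) / s⌉.toNat : ℝ) := by
      calc ((Mr - u) / s : ℝ) ≤ (⌈(Mr - u) / s⌉ : ℝ) := Int.le_ceil _
      _ ≤ ((⌈(Mr - u) / s⌉.toNat : ℤ) : ℝ) := by exact_mod_cast Int.self_le_toNat _
      _ = (⌈(Mr - u) / s⌉.toNat : ℝ) := by push_cast; rfl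
    have h3 : (⌈(Mr - u) / s⌉.toNat : ℝ) + 1 ≤ (k : ℝ) := by exact_mod_cast hk'
    linarith
  have : Mr < u + (k : ℝ) * s := by
    have := (div_lt_iff₀ hs).mp h1
    linarith
  rw [ha _ this, mul_zero]

lemma aux_shift {a : ℝ → ℂ} {s : ℝ} (c : ℕ → ℂ) (u : ℝ) :
    ∑' k : ℕ, c k * a ((u + s) + (k : ℝ) * s) = ∑' k : ℕ, c k * a (u + ((k : ℝ) + 1) * s) :=
  tsum_congr fun k => by ring_nf

lemma aux_zero_add {a : ℝ → ℂ} {s Mr : ℝ} (hs : 0 < s) (ha : ∀ t, Mr < t → a t = 0)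
    (c : ℕ → ℂ) (u : ℝ) :
    ∑' k : ℕ, c k * a (u + (k : ℝ) * s)
      = c 0 * a u + ∑' k : ℕ, c (k + 1) * a (u + ((k : ℝ) + 1) * s) := by
  rw [Summable.tsum_eq_zero_add (aux_summable hs ha c u)]
  congr 1
  · norm_num
  · exact tsum_congr fun k => by push_cast; ring_nf

lemma aux_step0 {a : ℝ → ℂ} {s Mr : ℝ} (hs : 0 < s) (ha : ∀ t, Mr < t → a t = 0) :
    Δ_[s] (auxF a s 0) = -a := by
  funext u
  show auxF a s 0 (u + s) - auxF a s 0 u = -a u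
  have hc : ∀ k : ℕ, (((k + 0).choose 0 : ℕ) : ℂ) = 1 := by simp
  unfold auxF
  rw [aux_shift, aux_zero_add hs ha]
  simp only [hc]
  ring

lemma aux_step {a : ℝ → ℂ} {s Mr : ℝ} (hs : 0 < s) (ha : ∀ t, Mr < t → a t = 0) (e : ℕ) :
    Δ_[s] (auxF a s (e + 1)) = -auxF a s e := by
  funext u
  show auxF a s (e + 1) (u + s) - auxF a s (e + 1) u = -auxF a s e u
  unfold auxF
  set c : ℕ → ℂ := fun k => (((k + (e + 1)).choose (e + 1) : ℕ) : ℂ) with hc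
  set c' : ℕ → ℂ := fun k => (((k + e).choose e : ℕ) : ℂ) with hc'
  set A : ℕ → ℂ := fun k => a (u + ((k : ℝ) + 1) * s) with hA
  rw [aux_shift c u, aux_zero_add hs ha c u, aux_zero_add hs ha c' u]
  have hsum1 : Summable (fun k : ℕ => c k * A k) := by
    have := aux_summable (a := a) hs ha c (u + s)
    apply this.congr
    intro k; simp only [hA]; ring_nf
  have hsum2 : Summable (fun k : ℕ => c (k + 1) * A k) := by
    have := aux_summable (a := a) hs ha (fun k => c (k + 1)) (u + s)
    apply this.congr
    intro k; simp only [hA]; ring_nf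
  have key : ∑' k : ℕ, c k * A k - ∑' k : ℕ, c (k + 1) * A k
      = -∑' k : ℕ, c' (k + 1) * A k := by
    rw [← Summable.tsum_sub hsum1 hsum2, ← tsum_neg]
    apply tsum_congr
    intro k
    have hnat : (k + 1 + (e + 1)).choose (e + 1)
        = (k + (e + 1)).choose (e + 1) + (k + 1 + e).choose e := by
      rw [show k + 1 + (e + 1) = (k + e + 1) + 1 by ring, Nat.choose_succ_succ,
        show k + (e + 1) = k + e + 1 by ring, show k + 1 + e = k + e + 1 by ring, add_comm]
    have : c k - c (k + 1) = -c' (k + 1) := by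
      simp only [hc, hc', hnat]
      push_cast
      ring
    rw [← sub_mul, this]
    ring
  have hc0 : c 0 = 1 := by simp [hc]
  have hc'0 : c' 0 = 1 := by simp [hc']
  rw [hc0, hc'0]
  simp only [hA] at key
  have := key
  ring_nf
  ring_nf at this
  linear_combination this

lemma aux_iter {a : ℝ → ℂ} {s Mr : ℝ} (hs : 0 < s) (ha : ∀ t, Mr < t → a t = 0) (e : ℕ) :
    (Δ_[s])^[e + 1] (auxF a s e) = fun u => (-1 : ℂ) ^ (e + 1) * a u := by
  induction e with
  | zero =>
    rw [Function.iterate_one, aux_step0 hs ha]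
    funext u; simp
  | succ e IH =>
    rw [Function.iterate_succ_apply, aux_step hs ha e,
      show -auxF a s e = (-1 : ℂ) • auxF a s e by funext u; simp,
      fwdDiff_iter_const_smul, IH]
    funext u
    simp only [Pi.smul_apply, smul_eq_mul]
    ring

lemma aux_identity {a : ℝ → ℂ} {s Mr : ℝ} (hs : 0 < s) (ha : ∀ t, Mr < t → a t = 0)
    (e : ℕ) (t : ℝ) :
    ∑ l ∈ Finset.range (e + 2), (-1 : ℂ) ^ l * (((e + 1).choose l : ℕ) : ℂ)
      * auxF a s e (t + (l : ℝ) * s) = a t := by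
  have h := fwdDiff_iter_eq_sum_shift s (auxF a s e) (e + 1) t
  rw [aux_iter hs ha e] at h
  have h2 : ∑ l ∈ Finset.range (e + 2), (-1 : ℂ) ^ l * (((e + 1).choose l : ℕ) : ℂ)
      * auxF a s e (t + (l : ℝ) * s)
      = (-1 : ℂ) ^ (e + 1) * ∑ k ∈ Finset.range (e + 1 + 1),
        ((-1 : ℤ) ^ (e + 1 - k) * ((e + 1).choose k : ℕ)) • auxF a s e (t + k • s) := by
    rw [Finset.mul_sum]
    apply Finset.sum_congr rfl
    intro l hl
    have hl' : l ≤ e + 1 := Nat.lt_succ_iff.mp (mem_range.mp hl)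
    rw [zsmul_eq_mul, nsmul_eq_mul]
    push_cast
    have hsign : (-1 : ℂ) ^ (e + 1) * (-1 : ℂ) ^ (e + 1 - l) = (-1 : ℂ) ^ l := by
      rw [← pow_add, show e + 1 + (e + 1 - l) = l + 2 * (e + 1 - l) by omega,
        pow_add, pow_mul, neg_one_sq, one_pow, mul_one]
    calc (-1 : ℂ) ^ l * ((e + 1).choose l : ℂ) * auxF a s e (t + (l : ℝ) * s)
        = ((-1 : ℂ) ^ (e + 1) * (-1 : ℂ) ^ (e + 1 - l)) * ((e + 1).choose l : ℂ)
          * auxF a s e (t + (l : ℝ) * s) := by rw [hsign]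
      _ = _ := by ring
  rw [h2, ← h]
  rw [← mul_assoc, ← pow_add]
  have : Even (e + 1 + (e + 1)) := ⟨e + 1, rfl⟩
  rw [this.neg_one_pow, one_mul]

/-- Lemma 2.1 of the paper: the functional `A_{NT}ζ = ∫_0^{(N+1)T} a(t)ζ(t)dt` is
represented as `B_{NT}ζ − V_{NT}ζ`, where `B_{NT}ζ` depends on the `d`-th increments
`ζ^{(d)}(t, τT)` on `[0,(N+1)T]` and `V_{NT}ζ` depends on the values of `ζ` on
`[−dτT, 0)`. -/
theorem functional_representation (T : ℝ) (hT : 0 < T) (d τ N : ℕ)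
    (hd : 1 ≤ d) (hτ : 1 ≤ τ) (hN : 1 ≤ N)
    (a ζ : ℝ → ℂ) (ha_cont : Continuous a)
    (ha_supp : ∀ t : ℝ, t ∉ Set.Icc (0 : ℝ) (((N : ℝ) + 1) * T) → a t = 0)
    (hζ : Continuous ζ)
    (b : ℝ → ℂ)
    (hb_in : ∀ t ∈ Set.Icc (0 : ℝ) (((N : ℝ) + 1) * T),
      b t = ∑' k : ℕ, (((k + d - 1).choose (d - 1) : ℕ) : ℂ) * a (t + (k : ℝ) * (τ : ℝ) * T))
    (hb_out : ∀ t : ℝ, t ∉ Set.Icc (0 : ℝ) (((N : ℝ) + 1) * T) → b t = 0)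
    (v : ℝ → ℂ)
    (hv : ∀ t ∈ Set.Ico (-((d : ℝ) * (τ : ℝ) * T)) (0 : ℝ),
      v t = ∑ l ∈ Finset.Icc (⌈(-t) / ((τ : ℝ) * T)⌉.toNat) d,
        (-1 : ℂ) ^ l * (d.choose l : ℂ) * b (t + (l : ℝ) * (τ : ℝ) * T)) :
    (∫ t in (0 : ℝ)..(((N : ℝ) + 1) * T), a t * ζ t) =
      (∫ t in (0 : ℝ)..(((N : ℝ) + 1) * T),
        b t * ∑ l ∈ Finset.range (d + 1),
          (-1 : ℂ) ^ l * (d.choose l : ℂ) * ζ (t - (l : ℝ) * (τ : ℝ) * T)) -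
      ∫ t in (-((d : ℝ) * (τ : ℝ) * T))..(0 : ℝ), v t * ζ t := by
  obtain ⟨e, rfl⟩ : ∃ e, d = e + 1 := ⟨d - 1, (Nat.succ_pred_eq_of_pos hd).symm⟩
  simp only [mul_assoc, show e + 1 + 1 = e + 2 from rfl] at hb_in hv ⊢
  set s : ℝ := (τ : ℝ) * T with hs_def
  set M : ℝ := ((N : ℝ) + 1) * T with hM_def
  have hτ' : (0 : ℝ) < (τ : ℝ) := by exact_mod_cast Nat.pos_of_ne_zero (by omega)
  have hs : 0 < s := mul_pos hτ' hT
  have hM : 0 < M := by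
    have : (0 : ℝ) < (N : ℝ) + 1 := by positivity
    exact mul_pos this hT
  have hMa : ∀ t, M < t → a t = 0 := fun t ht =>
    ha_supp t (fun hmem => absurd hmem.2 (not_le.mpr ht))
  have hb0 : ∀ u : ℝ, u < 0 → b u = 0 := fun u hu =>
    hb_out u (fun hmem => absurd hmem.1 (not_le.mpr hu))
  have hbM : ∀ u : ℝ, M < u → b u = 0 := fun u hu =>
    hb_out u (fun hmem => absurd hmem.2 (not_le.mpr hu))
  set K : ℕ := ⌈M / s⌉.toNat + 1 with hK_def
  have hK : M < (K : ℝ) * s := by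
    have h2 : M / s ≤ (⌈M / s⌉.toNat : ℝ) := by
      calc M / s ≤ (⌈M / s⌉ : ℝ) := Int.le_ceil _
      _ ≤ ((⌈M / s⌉.toNat : ℤ) : ℝ) := by exact_mod_cast Int.self_le_toNat _
      _ = (⌈M / s⌉.toNat : ℝ) := by push_cast; rfl
    have h3 : M / s < (K : ℝ) := by
      rw [hK_def]; push_cast; linarith
    calc M = M / s * s := by field_simp
    _ < (K : ℝ) * s := by exact mul_lt_mul_of_pos_right h3 hs
  set G : ℝ → ℂ := fun u => ∑ k ∈ Finset.range K,
    (((k + e).choose e : ℕ) : ℂ) * a (u + (k : ℝ) * s) with hG_def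
  have hGc : Continuous G := by
    apply continuous_finset_sum
    intro k _
    exact continuous_const.mul (ha_cont.comp (continuous_id.add continuous_const))
  have hFG : ∀ u : ℝ, 0 ≤ u → auxF a s e u = G u := by
    intro u hu
    apply tsum_eq_sum
    intro k hk
    have hkK : (K : ℝ) ≤ (k : ℝ) := by
      exact_mod_cast le_of_not_gt fun h => hk (Finset.mem_range.mpr h)
    have : M < u + (k : ℝ) * s := by nlinarith
    rw [hMa _ this, mul_zero]
  have hGz : ∀ u : ℝ, M < u → G u = 0 := by
    intro u hu
    apply Finset.sum_eq_zero
    intro k _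
    have hks : (0 : ℝ) ≤ (k : ℝ) * s := by positivity
    rw [hMa _ (by linarith), mul_zero]
  have hbG : ∀ u : ℝ, 0 ≤ u → b u = G u := by
    intro u hu
    by_cases hle : u ≤ M
    · have h1 : b u = auxF a s e u := by
        rw [hb_in u ⟨hu, hle⟩]
        exact tsum_congr fun k => by
          simp only [show k + (e + 1) - 1 = k + e from by omega,
            show e + 1 - 1 = e from by omega]
      rw [h1, hFG u hu]
    · rw [hbM u (lt_of_not_ge hle), hGz u (lt_of_not_ge hle)]
  have haG : ∀ t : ℝ, 0 ≤ t →
      a t = ∑ l ∈ Finset.range (e + 2), (-1 : ℂ) ^ l * (((e + 1).choose l : ℕ) : ℂ)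
        * G (t + (l : ℝ) * s) := by
    intro t ht
    conv_lhs => rw [← aux_identity hs hMa e t]
    refine Finset.sum_congr rfl fun l _ => ?_
    rw [hFG _ (add_nonneg ht (by positivity))]
  -- integrability of shifted b times ζ
  have hbshift : ∀ c : ℝ, (fun t => b (t + c) * ζ t)
      = fun t => (Set.Ici (-c)).indicator (fun t => G (t + c) * ζ t) t := by
    intro c; funext t
    by_cases h : t ∈ Set.Ici (-c)
    · rw [Set.indicator_of_mem h, hbG _ (by rw [Set.mem_Ici] at h; linarith)]
    · rw [Set.indicator_of_notMem h,
        hb0 _ (by rw [Set.mem_Ici, not_le] at h; linarith), zero_mul]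
  have hbint : ∀ c x y : ℝ, IntervalIntegrable (fun t => b (t + c) * ζ t) volume x y := by
    intro c x y
    rw [hbshift c, intervalIntegrable_iff]
    apply MeasureTheory.Integrable.indicator _ measurableSet_Ici
    exact ((hGc.comp (continuous_id.add continuous_const)).mul hζ).integrableOn_Ioc
  have hfcont : ∀ c : ℝ, Continuous fun u => G u * ζ (u - c) := fun c =>
    hGc.mul (hζ.comp (continuous_id.sub continuous_const))
  -- per-l splitting of the main integral
  have hJ : ∀ l : ℕ, (∫ t in (0 : ℝ)..M, G (t + (l : ℝ) * s) * ζ t)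
      = (∫ u in (0 : ℝ)..M, G u * ζ (u - (l : ℝ) * s))
        - ∫ u in (0 : ℝ)..((l : ℝ) * s), G u * ζ (u - (l : ℝ) * s) := by
    intro l
    set c : ℝ := (l : ℝ) * s with hc_def
    have hc0 : (0 : ℝ) ≤ c := by positivity
    have hint : ∀ x y : ℝ, IntervalIntegrable (fun u => G u * ζ (u - c)) volume x y :=
      fun x y => (hfcont c).intervalIntegrable x y
    have h1 : (∫ t in (0 : ℝ)..M, G (t + c) * ζ t)
        = ∫ u in c..(M + c), G u * ζ (u - c) := by
      have := intervalIntegral.integral_comp_add_right (a := 0) (b := M)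
        (fun u => G u * ζ (u - c)) c
      simp only [add_sub_cancel_right, zero_add] at this
      exact this
    have h2 : (∫ u in (0 : ℝ)..(M + c), G u * ζ (u - c))
        - (∫ u in (0 : ℝ)..c, G u * ζ (u - c))
        = ∫ u in c..(M + c), G u * ζ (u - c) :=
      intervalIntegral.integral_interval_sub_left (hint 0 (M + c)) (hint 0 c)
    have h3 : (∫ u in (0 : ℝ)..M, G u * ζ (u - c))
        + (∫ u in M..(M + c), G u * ζ (u - c))
        = ∫ u in (0 : ℝ)..(M + c), G u * ζ (u - c) :=
      intervalIntegral.integral_add_adjacent_intervals (hint 0 M) (hint M (M + c))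
    have h4 : (∫ u in M..(M + c), G u * ζ (u - c)) = 0 := by
      rw [intervalIntegral.integral_of_le (by linarith)]
      rw [MeasureTheory.setIntegral_congr_fun (g := fun _ => (0 : ℂ)) measurableSet_Ioc
        (fun u hu => by rw [hGz u hu.1, zero_mul])]
      simp
    rw [h1, ← h2, ← h3, h4, add_zero]
  -- main splitting
  have hA : (∫ t in (0 : ℝ)..M, a t * ζ t)
      = ∑ l ∈ Finset.range (e + 2), (-1 : ℂ) ^ l * (((e + 1).choose l : ℕ) : ℂ) *
        ((∫ u in (0 : ℝ)..M, G u * ζ (u - (l : ℝ) * s))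
          - ∫ u in (0 : ℝ)..((l : ℝ) * s), G u * ζ (u - (l : ℝ) * s)) := by
    have h1 : (∫ t in (0 : ℝ)..M, a t * ζ t)
        = ∫ t in (0 : ℝ)..M, ∑ l ∈ Finset.range (e + 2),
            (-1 : ℂ) ^ l * (((e + 1).choose l : ℕ) : ℂ) * (G (t + (l : ℝ) * s) * ζ t) := by
      apply intervalIntegral.integral_congr
      intro t ht
      rw [Set.uIcc_of_le hM.le] at ht
      show a t * ζ t = ∑ l ∈ Finset.range (e + 2),
        (-1 : ℂ) ^ l * (((e + 1).choose l : ℕ) : ℂ) * (G (t + (l : ℝ) * s) * ζ t)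
      rw [haG t ht.1, Finset.sum_mul]
      exact Finset.sum_congr rfl fun l _ => by ring
    have hswap := intervalIntegral.integral_finset_sum (μ := volume) (a := 0) (b := M) (s := Finset.range (e + 2))
      (f := fun (l : ℕ) (t : ℝ) => (-1 : ℂ) ^ l * (((e + 1).choose l : ℕ) : ℂ)
        * (G (t + (l : ℝ) * s) * ζ t))
      (fun l _ => ((continuous_const.mul
        ((hGc.comp (continuous_id.add continuous_const)).mul hζ)).intervalIntegrable _ _))
    rw [h1, hswap]
    refine Finset.sum_congr rfl fun l _ => ?_
    rw [intervalIntegral.integral_const_mul, hJ l]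
  have hB : ∑ l ∈ Finset.range (e + 2), (-1 : ℂ) ^ l * (((e + 1).choose l : ℕ) : ℂ) *
        ∫ u in (0 : ℝ)..M, G u * ζ (u - (l : ℝ) * s)
      = ∫ t in (0 : ℝ)..M, b t * ∑ l ∈ Finset.range (e + 2),
          (-1 : ℂ) ^ l * (((e + 1).choose l : ℕ) : ℂ) * ζ (t - (l : ℝ) * s) := by
    calc ∑ l ∈ Finset.range (e + 2), (-1 : ℂ) ^ l * (((e + 1).choose l : ℕ) : ℂ) *
          ∫ u in (0 : ℝ)..M, G u * ζ (u - (l : ℝ) * s)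
        = ∑ l ∈ Finset.range (e + 2), ∫ u in (0 : ℝ)..M,
            (-1 : ℂ) ^ l * (((e + 1).choose l : ℕ) : ℂ) * (G u * ζ (u - (l : ℝ) * s)) := by
          exact Finset.sum_congr rfl fun l _ =>
            (intervalIntegral.integral_const_mul _ _).symm
      _ = ∫ u in (0 : ℝ)..M, ∑ l ∈ Finset.range (e + 2),
            (-1 : ℂ) ^ l * (((e + 1).choose l : ℕ) : ℂ) * (G u * ζ (u - (l : ℝ) * s)) := by
          have hswap := intervalIntegral.integral_finset_sum (μ := volume) (a := 0) (b := M) (s := Finset.range (e + 2))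
            (f := fun (l : ℕ) (u : ℝ) => (-1 : ℂ) ^ l * (((e + 1).choose l : ℕ) : ℂ)
              * (G u * ζ (u - (l : ℝ) * s)))
            (fun l _ => ((continuous_const.mul
              (hGc.mul (hζ.comp (continuous_id.sub continuous_const)))).intervalIntegrable _ _))
          exact hswap.symm
      _ = ∫ t in (0 : ℝ)..M, b t * ∑ l ∈ Finset.range (e + 2),
            (-1 : ℂ) ^ l * (((e + 1).choose l : ℕ) : ℂ) * ζ (t - (l : ℝ) * s) := by
          apply intervalIntegral.integral_congr
          intro u hu
          rw [Set.uIcc_of_le hM.le] at hu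
          show (∑ l ∈ Finset.range (e + 2),
              (-1 : ℂ) ^ l * (((e + 1).choose l : ℕ) : ℂ) * (G u * ζ (u - (l : ℝ) * s)))
            = b u * ∑ l ∈ Finset.range (e + 2),
              (-1 : ℂ) ^ l * (((e + 1).choose l : ℕ) : ℂ) * ζ (u - (l : ℝ) * s)
          rw [hbG u hu.1, Finset.mul_sum]
          exact Finset.sum_congr rfl fun l _ => by ring
  set D : ℝ := ((e + 1 : ℕ) : ℝ) * s with hD_def
  have hD0 : 0 ≤ D := by positivity
  have hVl : ∀ l ∈ Finset.range (e + 2),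
      (∫ u in (0 : ℝ)..((l : ℝ) * s), G u * ζ (u - (l : ℝ) * s))
        = ∫ t in (-D)..(0 : ℝ), b (t + (l : ℝ) * s) * ζ t := by
    intro l hl
    have hl' : l ≤ e + 1 := Nat.lt_succ_iff.mp (Finset.mem_range.mp hl)
    set c : ℝ := (l : ℝ) * s with hc_def
    have hc0 : (0 : ℝ) ≤ c := by positivity
    have hcD : c ≤ D := by
      rw [hc_def, hD_def]
      have : (l : ℝ) ≤ ((e + 1 : ℕ) : ℝ) := by exact_mod_cast hl'
      exact mul_le_mul_of_nonneg_right this hs.le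
    have h1 : (∫ u in (0 : ℝ)..c, G u * ζ (u - c))
        = ∫ t in (-c)..(0 : ℝ), G (t + c) * ζ t := by
      have := intervalIntegral.integral_comp_add_right (a := -c) (b := 0)
        (fun u => G u * ζ (u - c)) c
      simp only [add_sub_cancel_right, zero_add, neg_add_cancel] at this
      exact this.symm
    have h2 : (∫ t in (-c)..(0 : ℝ), G (t + c) * ζ t)
        = ∫ t in (-c)..(0 : ℝ), b (t + c) * ζ t := by
      apply intervalIntegral.integral_congr
      intro t ht
      rw [Set.uIcc_of_le (by linarith : -c ≤ (0:ℝ))] at ht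
      show G (t + c) * ζ t = b (t + c) * ζ t
      rw [hbG _ (by have := ht.1; linarith)]
    have h3 : (∫ t in (-D)..(0 : ℝ), b (t + c) * ζ t)
        - (∫ t in (-D)..(-c), b (t + c) * ζ t)
        = ∫ t in (-c)..(0 : ℝ), b (t + c) * ζ t :=
      intervalIntegral.integral_interval_sub_left (hbint c (-D) 0) (hbint c (-D) (-c))
    have h4 : (∫ t in (-D)..(-c), b (t + c) * ζ t) = 0 := by
      rw [intervalIntegral.integral_of_le (neg_le_neg hcD)]
      have hae : ∀ᵐ t ∂(volume : Measure ℝ), t ∈ Set.Ioc (-D) (-c) →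
          b (t + c) * ζ t = 0 := by
        rw [MeasureTheory.ae_iff]
        apply measure_mono_null _ (measure_singleton (-c))
        intro t ht
        rw [Set.mem_setOf_eq, Classical.not_imp] at ht
        obtain ⟨hmem, hne⟩ := ht
        by_contra hne2
        have htlt : t < -c := lt_of_le_of_ne hmem.2 (by simpa using hne2)
        exact hne (by rw [hb0 _ (by linarith), zero_mul])
      calc (∫ t in Set.Ioc (-D) (-c), b (t + c) * ζ t)
          = ∫ _ in Set.Ioc (-D) (-c), (0 : ℂ) :=
            MeasureTheory.setIntegral_congr_ae measurableSet_Ioc hae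
        _ = 0 := by simp
    rw [h1, h2, ← h3, h4, sub_zero]
  have hV : ∑ l ∈ Finset.range (e + 2), (-1 : ℂ) ^ l * (((e + 1).choose l : ℕ) : ℂ) *
        ∫ u in (0 : ℝ)..((l : ℝ) * s), G u * ζ (u - (l : ℝ) * s)
      = ∫ t in (-D)..(0 : ℝ), v t * ζ t := by
    calc ∑ l ∈ Finset.range (e + 2), (-1 : ℂ) ^ l * (((e + 1).choose l : ℕ) : ℂ) *
          ∫ u in (0 : ℝ)..((l : ℝ) * s), G u * ζ (u - (l : ℝ) * s)
        = ∑ l ∈ Finset.range (e + 2), ∫ t in (-D)..(0 : ℝ),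
            (-1 : ℂ) ^ l * (((e + 1).choose l : ℕ) : ℂ) * (b (t + (l : ℝ) * s) * ζ t) := by
          refine Finset.sum_congr rfl fun l hl => ?_
          rw [hVl l hl, intervalIntegral.integral_const_mul]
      _ = ∫ t in (-D)..(0 : ℝ), ∑ l ∈ Finset.range (e + 2),
            (-1 : ℂ) ^ l * (((e + 1).choose l : ℕ) : ℂ) * (b (t + (l : ℝ) * s) * ζ t) := by
          have hswap := intervalIntegral.integral_finset_sum (μ := volume) (a := -D) (b := 0) (s := Finset.range (e + 2))
            (f := fun (l : ℕ) (t : ℝ) => (-1 : ℂ) ^ l * (((e + 1).choose l : ℕ) : ℂ)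
              * (b (t + (l : ℝ) * s) * ζ t))
            (fun l _ => (hbint ((l : ℝ) * s) (-D) 0).const_mul _)
          exact hswap.symm
      _ = ∫ t in (-D)..(0 : ℝ), v t * ζ t := by
          apply intervalIntegral.integral_congr_ae
          rw [MeasureTheory.ae_iff]
          apply measure_mono_null _ (measure_singleton (0 : ℝ))
          intro t ht
          rw [Set.mem_setOf_eq, Classical.not_imp] at ht
          obtain ⟨hmem, hne⟩ := ht
          rw [Set.uIoc_of_le (by linarith : -D ≤ (0:ℝ))] at hmem
          by_contra h0
          apply hne
          have ht0 : t < 0 := lt_of_le_of_ne hmem.2 (by simpa using h0)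
          have htIco : t ∈ Set.Ico (-D) (0 : ℝ) := ⟨hmem.1.le, ht0⟩
          have hsub : Finset.Icc (⌈(-t) / s⌉.toNat) (e + 1) ⊆ Finset.range (e + 2) :=
            fun l hl => Finset.mem_range.mpr
              (by have := (Finset.mem_Icc.mp hl).2; omega)
          have hzero : ∀ l ∈ Finset.range (e + 2),
              l ∉ Finset.Icc (⌈(-t) / s⌉.toNat) (e + 1) →
              (-1 : ℂ) ^ l * (((e + 1).choose l : ℕ) : ℂ) * (b (t + (l : ℝ) * s) * ζ t)
                = 0 := by
            intro l hlr hlni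
            have hl1 : l ≤ e + 1 := Nat.lt_succ_iff.mp (Finset.mem_range.mp hlr)
            have hlm : l < ⌈(-t) / s⌉.toNat := by
              rw [Finset.mem_Icc] at hlni; omega
            have hpos : 0 < (-t) / s := div_pos (by linarith) hs
            have hcz : (0 : ℤ) < ⌈(-t) / s⌉ := Int.ceil_pos.mpr hpos
            have hmZ : ((⌈(-t) / s⌉.toNat : ℤ) : ℝ) = ((⌈(-t) / s⌉ : ℤ) : ℝ) := by
              rw [Int.toNat_of_nonneg hcz.le]
            have hlt1 : (l : ℝ) + 1 ≤ (⌈(-t) / s⌉.toNat : ℝ) := by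
              exact_mod_cast Nat.succ_le_of_lt hlm
            have hceil : ((⌈(-t) / s⌉ : ℤ) : ℝ) < (-t) / s + 1 := Int.ceil_lt_add_one _
            have hlts : (l : ℝ) < (-t) / s := by
              have : ((⌈(-t) / s⌉.toNat : ℕ) : ℝ) < (-t) / s + 1 := by
                rw [show ((⌈(-t) / s⌉.toNat : ℕ) : ℝ) = ((⌈(-t) / s⌉.toNat : ℤ) : ℝ) by
                  push_cast; rfl, hmZ]; exact hceil
              linarith
            have : (l : ℝ) * s < -t := (lt_div_iff₀ hs).mp hlts
            rw [hb0 _ (by linarith), zero_mul, mul_zero]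
          calc ∑ l ∈ Finset.range (e + 2),
                (-1 : ℂ) ^ l * (((e + 1).choose l : ℕ) : ℂ) * (b (t + (l : ℝ) * s) * ζ t)
              = ∑ l ∈ Finset.Icc (⌈(-t) / s⌉.toNat) (e + 1),
                (-1 : ℂ) ^ l * (((e + 1).choose l : ℕ) : ℂ) * (b (t + (l : ℝ) * s) * ζ t) :=
                (Finset.sum_subset hsub hzero).symm
            _ = (∑ l ∈ Finset.Icc (⌈(-t) / s⌉.toNat) (e + 1),
                (-1 : ℂ) ^ l * ((((e + 1).choose l : ℕ) : ℂ) * b (t + (l : ℝ) * s))) * ζ t := by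
                rw [Finset.sum_mul]
                exact Finset.sum_congr rfl fun l _ => by ring
            _ = v t * ζ t := by rw [hv t htIco]
  calc (∫ t in (0 : ℝ)..M, a t * ζ t)
      = ∑ l ∈ Finset.range (e + 2), (-1 : ℂ) ^ l * (((e + 1).choose l : ℕ) : ℂ) *
        ((∫ u in (0 : ℝ)..M, G u * ζ (u - (l : ℝ) * s))
          - ∫ u in (0 : ℝ)..((l : ℝ) * s), G u * ζ (u - (l : ℝ) * s)) := hA
    _ = (∑ l ∈ Finset.range (e + 2), (-1 : ℂ) ^ l * (((e + 1).choose l : ℕ) : ℂ) *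
          ∫ u in (0 : ℝ)..M, G u * ζ (u - (l : ℝ) * s))
        - ∑ l ∈ Finset.range (e + 2), (-1 : ℂ) ^ l * (((e + 1).choose l : ℕ) : ℂ) *
          ∫ u in (0 : ℝ)..((l : ℝ) * s), G u * ζ (u - (l : ℝ) * s) := by
        rw [← Finset.sum_sub_distrib]
        exact Finset.sum_congr rfl fun l _ => by ring
    _ = _ := by rw [hB, hV]; simp only [mul_assoc]
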